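/- If the density f has no plateaus on sets of positive measure, i.e., m({x : f(x) = y}) = 0 for every y > 0, then P_f({x : pv_f(x) ≤ β}) = β for every β in the closure of the range of pv_f; in particular the alert-rate bound of the regulation theorem holds with equality. -/

import Mathlib

open MeasureTheory ENNReal Filter Topology

/-- The p-value of `x` w.r.t. a probability density `f`:
`pv_f(x) = P_f({t : f(t) ≤ f(x)})`. -/
noncomputable def pValue {X : Type*} [MeasurableSpace X] (m : Measure X)
    (f : X → ℝ≥0∞) (x : X) : ℝ≥0∞ :=
  ∫⁻ t in {t | f t ≤ f x}, f t ∂m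

/-- If the density `f` has no plateaus of positive measure, i.e.
`m({x : f(x) = y}) = 0` for every `y > 0`, then `P_f({x : pv_f(x) ≤ β}) = β`
for every `β` in the closure of the range of `pv_f`; in particular the
alert-rate bound holds with equality. -/
theorem pValue_alert_prob_eq_of_no_plateau {X : Type*} [MeasurableSpace X]
    (m : Measure X) [SigmaFinite m] (f : X → ℝ≥0∞) (hf : Measurable f)
    (hf1 : ∫⁻ x, f x ∂m = 1)
    (hlevel : ∀ y : ℝ≥0∞, 0 < y → m {x | f x = y} = 0) :
    ∀ β ∈ closure (Set.range (pValue m f)),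
      ∫⁻ x in {x | pValue m f x ≤ β}, f x ∂m = β := by
  intro β hβ
  set ν := m.withDensity f with hνdef
  have hmeas : ∀ y : ℝ≥0∞, MeasurableSet {x | f x ≤ y} := fun y => hf measurableSet_Iic
  have hνs : ∀ s : Set X, MeasurableSet s → ν s = ∫⁻ x in s, f x ∂m :=
    fun s hs => withDensity_apply f hs
  have hνuniv : ν Set.univ = 1 := by
    rw [hνs _ MeasurableSet.univ, Measure.restrict_univ, hf1]
  have hνlevel : ∀ y : ℝ≥0∞, ν {x | f x = y} = 0 := by
    intro y
    have hsm : MeasurableSet {x | f x = y} := hf (measurableSet_singleton y)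
    rw [hνs _ hsm]
    have heq : ∫⁻ x in {x | f x = y}, f x ∂m = ∫⁻ x in {x | f x = y}, y ∂m :=
      setLIntegral_congr_fun hsm (fun x hx => hx)
    rw [heq, setLIntegral_const]
    rcases eq_or_ne y 0 with rfl | hy
    · simp
    · rw [hlevel y (pos_iff_ne_zero.mpr hy), mul_zero]
  set G : ℝ≥0∞ → ℝ≥0∞ := fun y => ν {x | f x ≤ y} with hGdef
  have hGmono : Monotone G := fun a b hab => measure_mono (fun x hx => le_trans hx hab)
  have hpv : ∀ x, pValue m f x = G (f x) := fun x => (hνs _ (hmeas (f x))).symm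
  have hβ1 : β ≤ 1 := by
    have hsub : closure (Set.range (pValue m f)) ⊆ Set.Iic 1 := by
      apply closure_minimal _ isClosed_Iic
      rintro _ ⟨x, rfl⟩
      rw [hpv]
      calc G (f x) ≤ ν Set.univ := measure_mono (Set.subset_univ _)
        _ = 1 := hνuniv
    exact hsub hβ
  set S : Set ℝ≥0∞ := {y | G y ≤ β} with hSdef
  have hS0 : (0:ℝ≥0∞) ∈ S := by
    have h0 : {x | f x ≤ (0:ℝ≥0∞)} = {x | f x = 0} := by ext x; simp [le_zero_iff]
    show G 0 ≤ β
    rw [hGdef]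
    simp only
    rw [h0, hνlevel 0]
    exact zero_le
  set c := sSup S with hcdef
  have hA : G c ≤ β := by
    obtain ⟨u, hu_mono, hu_tendsto, hu_mem⟩ :=
      exists_seq_tendsto_sSup ⟨0, hS0⟩ (OrderTop.bddAbove S)
    have hlt : ν {x | f x < c} ≤ β := by
      have hsub : {x | f x < c} ⊆ ⋃ n, {x | f x ≤ u n} := by
        intro x hx
        obtain ⟨n, hn⟩ := (hu_tendsto.eventually (Ioi_mem_nhds hx)).exists
        exact Set.mem_iUnion.mpr ⟨n, hn.le⟩
      have hmonoset : Monotone fun n => {x | f x ≤ u n} :=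
        fun i j hij x hx => le_trans hx (hu_mono hij)
      calc ν {x | f x < c} ≤ ν (⋃ n, {x | f x ≤ u n}) := measure_mono hsub
        _ = ⨆ n, ν {x | f x ≤ u n} := hmonoset.measure_iUnion
        _ ≤ β := iSup_le fun n => hu_mem n
    calc G c ≤ ν {x | f x < c} + ν {x | f x = c} := by
          refine le_trans (measure_mono fun x (hx : f x ≤ c) => ?_) (measure_union_le _ _)
          exact hx.lt_or_eq
      _ = ν {x | f x < c} := by rw [hνlevel c, add_zero]
      _ ≤ β := hlt
  have hB : β ≤ G c := by
    rcases eq_or_ne c ⊤ with hctop | hctop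
    · have huniv : {x | f x ≤ c} = Set.univ := by
        ext x; simp [hctop]
      show β ≤ ν {x | f x ≤ c}
      rw [huniv, hνuniv]
      exact hβ1
    · set s : ℕ → Set X := fun n => {x | f x ≤ c + (n : ℝ≥0∞)⁻¹} with hsdef
      have hanti : Antitone s := fun i j hij x hx =>
        le_trans hx (add_le_add_right (ENNReal.inv_le_inv.mpr (Nat.cast_le.mpr hij)) c)
      have hiInter : ⋂ n, s n = {x | f x ≤ c} := by
        ext x
        simp only [Set.mem_iInter, hsdef, Set.mem_setOf_eq]
        constructor
        · intro h
          have htt : Tendsto (fun n : ℕ => c + (n:ℝ≥0∞)⁻¹) atTop (𝓝 c) := by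
            simpa using (ENNReal.tendsto_inv_nat_nhds_zero.const_add c)
          exact ge_of_tendsto htt (Filter.Eventually.of_forall h)
        · intro h n
          exact le_trans h le_self_add
      have hfin : ∃ n, ν (s n) ≠ ∞ := by
        refine ⟨0, ?_⟩
        have : ν (s 0) ≤ 1 := hνuniv ▸ measure_mono (Set.subset_univ _)
        exact (lt_of_le_of_lt this one_lt_top).ne
      have hInt : ν (⋂ n, s n) = ⨅ n, ν (s n) :=
        Directed.measure_iInter (fun n => (hmeas _).nullMeasurableSet)
          hanti.directed_ge hfin
      show β ≤ ν {x | f x ≤ c}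
      rw [← hiInter, hInt]
      refine le_iInf fun n => ?_
      have hgt : c < c + (n:ℝ≥0∞)⁻¹ :=
        ENNReal.lt_add_right hctop (ENNReal.inv_ne_zero.mpr (natCast_ne_top n))
      have hnotS : c + (n:ℝ≥0∞)⁻¹ ∉ S := fun hmem => absurd (le_sSup hmem) (not_le.mpr hgt)
      exact (not_le.mp hnotS).le
  have hset : {x | pValue m f x ≤ β} = {x | f x ≤ c} := by
    ext x
    simp only [Set.mem_setOf_eq, hpv]
    constructor
    · intro h
      exact le_sSup h
    · intro h
      exact le_trans (hGmono h) hA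
  rw [hset, ← hνs _ (hmeas c)]
  exact le_antisymm hA hB
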